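/- Let n ≥ 2 be an integer, let Ω be a nonempty bounded open subset of ℝ^n, let w ∈ (0,1)^n, and let ε > 0 be such that the closure of w + εΩ is contained in (0,1)^n. Define T(ε) ≡ ℝ^n \ ⋃_{z ∈ ℤ^n} cl(z + w + εΩ). If u : ℝ^n → ℝ is continuous on cl T(ε), is twice continuously differentiable with vanishing Laplacian on T(ε), and is ℤ^n-periodic (u(x + e_i) = u(x) for all x ∈ cl T(ε) and all i ∈ {1,…,n}, where e_1,…,e_n is the canonical basis of ℝ^n), then the maximum of u over cl T(ε) is attained on ∂(w + εΩ), i.e. sup_{x ∈ cl T(ε)} u(x) = max_{x ∈ ∂(w+εΩ)} u(x). -/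

import Mathlib

open scoped BigOperators

noncomputable section

/-- The Laplacian of `u : ℝⁿ → ℝ` at `x`, i.e. `∑ i, ∂²u/∂xᵢ² (x)`. -/
def lapl {n : ℕ} (u : EuclideanSpace ℝ (Fin n) → ℝ) (x : EuclideanSpace ℝ (Fin n)) : ℝ :=
  ∑ i : Fin n,
    fderiv ℝ (fun y => fderiv ℝ u y (EuclideanSpace.single i 1)) x (EuclideanSpace.single i 1)

/-- `u` is harmonic on `s`: twice continuously differentiable there with vanishing Laplacian. -/
def IsHarmonicOn {n : ℕ} (u : EuclideanSpace ℝ (Fin n) → ℝ)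
    (s : Set (EuclideanSpace ℝ (Fin n))) : Prop :=
  ContDiffOn ℝ 2 u s ∧ ∀ x ∈ s, lapl u x = 0

/-- `u` is `ℤⁿ`-periodic on `s`: `u (x + eᵢ) = u x` for `x ∈ s` and each canonical basis
vector `eᵢ`. -/
def IsPeriodicOn {n : ℕ} (u : EuclideanSpace ℝ (Fin n) → ℝ)
    (s : Set (EuclideanSpace ℝ (Fin n))) : Prop :=
  ∀ x ∈ s, ∀ i : Fin n, u (x + EuclideanSpace.single i 1) = u x

/-- The fundamental cell `A = (0,1)ⁿ`. -/
def unitCell (n : ℕ) : Set (EuclideanSpace ℝ (Fin n)) :=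
  {x | ∀ i, x i ∈ Set.Ioo (0 : ℝ) 1}

/-- The perforation `w + ε Ω = {w + ε x : x ∈ Ω}`. -/
def hole {n : ℕ} (Ω : Set (EuclideanSpace ℝ (Fin n))) (w : EuclideanSpace ℝ (Fin n)) (ε : ℝ) :
    Set (EuclideanSpace ℝ (Fin n)) :=
  (fun x => w + ε • x) '' Ω

/-- The integer vector `z ∈ ℤⁿ` as a point of `ℝⁿ`. -/
def intVec {n : ℕ} (z : Fin n → ℤ) : EuclideanSpace ℝ (Fin n) :=
  WithLp.toLp 2 (fun i => (z i : ℝ))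

/-- The periodically perforated domain `T(ε) = ℝⁿ \ ⋃ z ∈ ℤⁿ, cl (z + w + ε Ω)`. -/
def perfDom {n : ℕ} (Ω : Set (EuclideanSpace ℝ (Fin n))) (w : EuclideanSpace ℝ (Fin n)) (ε : ℝ) :
    Set (EuclideanSpace ℝ (Fin n)) :=
  (⋃ z : Fin n → ℤ, closure ((fun x => intVec z + x) '' hole Ω w ε))ᶜ

/-- A bounded open set `Ω ⊆ ℝⁿ` is of class `C^{1,α}`: near each point `p` of `∂Ω`, after an
orthogonal change of coordinates `R` and a translation by `p`, the boundary `∂Ω` coincides with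
the graph of a continuously differentiable function `γ` of the first `n-1` coordinates whose
gradient is `α`-Hölder continuous, with `Ω` lying locally on one side of this graph. -/
def IsC1AlphaDomain {n : ℕ} (hn : 0 < n) (α : ℝ)
    (Ω : Set (EuclideanSpace ℝ (Fin n))) : Prop :=
  ∀ p ∈ frontier Ω,
    ∃ (R : EuclideanSpace ℝ (Fin n) ≃ₗᵢ[ℝ] EuclideanSpace ℝ (Fin n)) (r : ℝ)
      (γ : EuclideanSpace ℝ (Fin (n - 1)) → ℝ) (C : NNReal),
      0 < r ∧ ContDiff ℝ 1 γ ∧ HolderWith C α.toNNReal (fderiv ℝ γ) ∧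
      ∀ x ∈ Metric.ball p r,
        (x ∈ frontier Ω ↔
          R (x - p) ⟨n - 1, Nat.sub_lt hn Nat.one_pos⟩ =
            γ (WithLp.toLp 2 (fun i => R (x - p) (Fin.castLE (Nat.sub_le n 1) i)))) ∧
        (x ∈ Ω ↔
          R (x - p) ⟨n - 1, Nat.sub_lt hn Nat.one_pos⟩ <
            γ (WithLp.toLp 2 (fun i => R (x - p) (Fin.castLE (Nat.sub_le n 1) i))))

/-- `g ∈ C^{1,α}(S)`: `g` is the restriction to `S` of a continuously differentiable function
defined on an open neighbourhood of `S` whose gradient is `α`-Hölder continuous there. -/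
def MemC1Alpha {n : ℕ} (α : ℝ) (S : Set (EuclideanSpace ℝ (Fin n)))
    (g : EuclideanSpace ℝ (Fin n) → ℝ) : Prop :=
  ∃ (U : Set (EuclideanSpace ℝ (Fin n))) (G : EuclideanSpace ℝ (Fin n) → ℝ) (C : NNReal),
    IsOpen U ∧ S ⊆ U ∧ ContDiffOn ℝ 1 G U ∧ HolderOnWith C α.toNNReal (fderiv ℝ G) U ∧
    Set.EqOn G g S


section AuxCalc
open Filter Metric Set


/-- derivative positive at 0, right max on [0,b] : contradiction -/
lemma no_right_max {φ : ℝ → ℝ} {c b : ℝ} (hb : 0 < b) (hφ : HasDerivAt φ c 0)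
    (hc : 0 < c) (hle : ∀ t ∈ Set.Icc 0 b, φ t ≤ φ 0) : False := by
  have hs := hasDerivAt_iff_tendsto_slope.mp hφ
  have hev : ∀ᶠ t in nhdsWithin (0:ℝ) {(0:ℝ)}ᶜ, 0 < slope φ 0 t :=
    hs.eventually (lt_mem_nhds hc)
  have hev' : ∀ᶠ t in nhdsWithin (0:ℝ) (Set.Ioi 0), 0 < slope φ 0 t :=
    hev.filter_mono (nhdsWithin_mono _ (fun t ht => ne_of_gt ht))
  have hmem : Set.Ioo (0:ℝ) b ∈ nhdsWithin (0:ℝ) (Set.Ioi 0) :=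
    Ioo_mem_nhdsGT_of_mem ⟨le_refl 0, hb⟩
  obtain ⟨t, ht, htIoo⟩ := (hev'.and (eventually_of_mem hmem (fun x hx => hx))).exists
  have h0 : 0 < t := htIoo.1
  have : 0 < (φ t - φ 0) / t := by
    simpa [slope_def_field, div_eq_iff, sub_eq_iff_eq_add] using ht
  have h1 : 0 < φ t - φ 0 := by
    by_contra h
    push_neg at h
    nlinarith [div_nonpos_of_nonpos_of_nonneg (by linarith : φ t - φ 0 ≤ 0) h0.le]
  have := hle t ⟨h0.le, htIoo.2.le⟩
  linarith

/-- second derivative test: local max at 0 implies second derivative ≤ 0 -/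
lemma second_deriv_nonpos {g g' : ℝ → ℝ} {c : ℝ}
    (hg : ∀ᶠ t in nhds (0:ℝ), HasDerivAt g (g' t) t)
    (hg' : HasDerivAt g' c 0) (hmax : IsLocalMax g 0) : c ≤ 0 := by
  by_contra hcpos
  push_neg at hcpos
  have h0 : g' 0 = 0 := by
    have h1 := hmax.deriv_eq_zero
    rwa [hg.self_of_nhds.deriv] at h1
  -- slope of g' tends to c > 0
  have hs := hasDerivAt_iff_tendsto_slope.mp hg'
  have hev : ∀ᶠ t in nhdsWithin (0:ℝ) {(0:ℝ)}ᶜ, 0 < slope g' 0 t :=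
    hs.eventually (lt_mem_nhds hcpos)
  have hev' : ∀ᶠ t in nhdsWithin (0:ℝ) (Set.Ioi 0), 0 < slope g' 0 t :=
    hev.filter_mono (nhdsWithin_mono _ (fun t ht => ne_of_gt ht))
  obtain ⟨δ₁, hδ₁', hsl⟩ := mem_nhdsGT_iff_exists_Ioo_subset.mp hev'
  have hδ₁ : 0 < δ₁ := hδ₁'
  obtain ⟨δ₂, hδ₂, hder⟩ := Metric.eventually_nhds_iff.mp hg
  obtain ⟨δ₃, hδ₃, hloc⟩ := Metric.eventually_nhds_iff.mp hmax
  set δ := min δ₁ (min δ₂ δ₃) with hδdef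
  have hδ : 0 < δ := lt_min hδ₁ (lt_min hδ₂ hδ₃)
  have hgpos : ∀ t ∈ Set.Ioo (0:ℝ) δ, 0 < g' t := by
    intro t ht
    have h1 : 0 < slope g' 0 t := hsl ⟨ht.1, lt_of_lt_of_le ht.2 (min_le_left _ _)⟩
    have : slope g' 0 t = g' t / t := by simp [slope_def_field, h0]
    rw [this] at h1
    exact (div_pos_iff.mp h1).resolve_right (fun h => absurd ht.1 (not_lt.mpr h.2.le)) |>.1
  have hmono : StrictMonoOn g (Set.Icc 0 (δ/2)) := by
    apply strictMonoOn_of_deriv_pos (convex_Icc _ _)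
    · intro t ht
      have : dist t 0 < δ₂ := by
        rw [Real.dist_eq, sub_zero, abs_of_nonneg ht.1]
        calc t ≤ δ/2 := ht.2
        _ < δ := by linarith
        _ ≤ δ₂ := le_trans (min_le_right _ _) (min_le_left _ _)
      exact ((hder this).differentiableAt.continuousAt).continuousWithinAt
    · intro t ht
      rw [interior_Icc] at ht
      have htδ : t ∈ Set.Ioo (0:ℝ) δ := ⟨ht.1, by linarith [ht.2]⟩
      have : dist t 0 < δ₂ := by
        rw [Real.dist_eq, sub_zero, abs_of_nonneg ht.1.le]
        exact lt_of_lt_of_le htδ.2 (le_trans (min_le_right _ _) (min_le_left _ _))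
      rw [(hder this).deriv]
      exact hgpos t htδ
  have h1 : g 0 < g (δ/2) := hmono ⟨le_refl 0, by linarith⟩ ⟨by linarith, le_refl _⟩ (by linarith)
  have h2 : g (δ/2) ≤ g 0 := by
    apply hloc
    rw [Real.dist_eq, sub_zero, abs_of_nonneg (by linarith)]
    calc δ/2 < δ := by linarith
    _ ≤ δ₃ := le_trans (min_le_right _ _) (min_le_right _ _)
  linarith

lemma lapl_nonpos {n : ℕ} {s : Set (EuclideanSpace ℝ (Fin n))} (hs : IsOpen s)
    {u : EuclideanSpace ℝ (Fin n) → ℝ} (hu : ContDiffOn ℝ 2 u s)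
    {x : EuclideanSpace ℝ (Fin n)} (hx : x ∈ s) (hmax : IsLocalMax u x) :
    lapl u x ≤ 0 := by
  rw [lapl]
  apply Finset.sum_nonpos
  intro i _
  set e : EuclideanSpace ℝ (Fin n) := EuclideanSpace.single i 1 with he
  -- the line through x in direction e
  set φ : ℝ → EuclideanSpace ℝ (Fin n) := fun t => x + t • e with hφdef
  have hφc : Continuous φ := by fun_prop
  have hφ0 : φ 0 = x := by simp [hφdef]
  have hφd : ∀ t : ℝ, HasDerivAt φ e t := by
    intro t
    simpa [hφdef] using ((hasDerivAt_id t).smul_const e).const_add x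
  -- u is C² at points of s
  have huA : ∀ {p : EuclideanSpace ℝ (Fin n)}, p ∈ s → ContDiffAt ℝ 2 u p :=
    fun hp => hu.contDiffAt (hs.mem_nhds hp)
  -- w = directional derivative function
  set w : EuclideanSpace ℝ (Fin n) → ℝ := fun p => fderiv ℝ u p e with hwdef
  have hwd : DifferentiableAt ℝ w x := by
    have h1 : ContDiffAt ℝ 1 (fderiv ℝ u) x := (huA hx).fderiv_right (by norm_num)
    exact (ContinuousLinearMap.apply ℝ ℝ e).differentiableAt.comp x
      (h1.differentiableAt (by norm_num))
  set g : ℝ → ℝ := fun t => u (φ t) with hgdef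
  set g' : ℝ → ℝ := fun t => w (φ t) with hg'def
  have hev : ∀ᶠ t in nhds (0:ℝ), φ t ∈ s := by
    have : s ∈ nhds (φ 0) := by rw [hφ0]; exact hs.mem_nhds hx
    exact hφc.continuousAt.eventually_mem this
  have hg : ∀ᶠ t in nhds (0:ℝ), HasDerivAt g (g' t) t := by
    filter_upwards [hev] with t ht
    have hud : DifferentiableAt ℝ u (φ t) := (huA ht).differentiableAt (by norm_num)
    exact hud.hasFDerivAt.comp_hasDerivAt t (hφd t)
  have hg' : HasDerivAt g' (fderiv ℝ w x e) 0 := by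
    have h2 : HasFDerivAt w (fderiv ℝ w x) (φ 0) := hφ0 ▸ hwd.hasFDerivAt
    exact h2.comp_hasDerivAt 0 (hφd 0)
  have hmax' : IsLocalMax g 0 := by
    have : IsLocalMax u (φ 0) := by rw [hφ0]; exact hmax
    exact this.comp_continuous hφc.continuousAt
  exact second_deriv_nonpos hg hg' hmax'

variable {n : ℕ} (y : EuclideanSpace ℝ (Fin n)) (lam : ℝ)

/-- the barrier -/
def Hb (x : EuclideanSpace ℝ (Fin n)) : ℝ := Real.exp (-lam * ‖x - y‖^2)

/-- the derivative of the barrier -/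
def Db (x : EuclideanSpace ℝ (Fin n)) : EuclideanSpace ℝ (Fin n) →L[ℝ] ℝ :=
  (-(2*lam) * Hb y lam x) • (innerSL ℝ (x - y))

lemma Hb_pos (x) : 0 < Hb y lam x := Real.exp_pos _

lemma Hb_contDiff : ContDiff ℝ 2 (Hb y lam) := by
  apply Real.contDiff_exp.comp
  exact (contDiff_const.mul ((contDiff_id.sub contDiff_const).norm_sq ℝ))

lemma hasFDerivAt_Hb (x) : HasFDerivAt (Hb y lam) (Db y lam x) x := by
  have h1 : HasFDerivAt (fun x : EuclideanSpace ℝ (Fin n) => ‖x - y‖^2)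
      (2 • (innerSL ℝ (x - y)).comp (ContinuousLinearMap.id ℝ _)) x :=
    ((hasFDerivAt_id x).sub_const y).norm_sq
  have h2 := (h1.const_mul (-lam)).exp
  refine h2.congr_fderiv ?_
  ext v
  simp [Db, Hb]
  ring

lemma Db_apply (x v) : Db y lam x v = (-(2*lam) * Hb y lam x) * (inner ℝ (x - y) v : ℝ) := rfl

lemma Db_single (x) (i : Fin n) :
    Db y lam x (EuclideanSpace.single i 1) = (-(2*lam) * Hb y lam x) * (x i - y i) := by
  rw [Db_apply]
  congr 1
  rw [EuclideanSpace.inner_single_right]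
  simp

/-- second partial derivatives of the barrier -/
lemma Hb_second (x) (i : Fin n) :
    fderiv ℝ (fun p => fderiv ℝ (Hb y lam) p (EuclideanSpace.single i 1)) x
      (EuclideanSpace.single i 1)
    = Hb y lam x * (4*lam^2*(x i - y i)^2 - 2*lam) := by
  have hfe : (fun p => fderiv ℝ (Hb y lam) p (EuclideanSpace.single i 1))
      = fun p => (-(2*lam) * Hb y lam p) * (p i - y i) := by
    funext p
    rw [(hasFDerivAt_Hb y lam p).fderiv, Db_single]
  rw [hfe]
  -- product rule
  have hf1 : HasFDerivAt (fun p : EuclideanSpace ℝ (Fin n) => -(2*lam) * Hb y lam p)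
      ((-(2*lam)) • Db y lam x) x := (hasFDerivAt_Hb y lam x).const_mul _
  have hf2 : HasFDerivAt (fun p : EuclideanSpace ℝ (Fin n) => p i - y i)
      ((EuclideanSpace.proj i : EuclideanSpace ℝ (Fin n) →L[ℝ] ℝ)) x := by
    simpa using ((EuclideanSpace.proj i : EuclideanSpace ℝ (Fin n) →L[ℝ] ℝ)
      |>.hasFDerivAt (x := x)).sub_const (y i)
  have hprod := hf1.mul hf2
  rw [HasFDerivAt.fderiv (f := fun p : EuclideanSpace ℝ (Fin n) => -(2*lam) * Hb y lam p * (p i - y i)) hprod]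
  simp [Db_single, PiLp.proj_apply]
  ring

lemma Hb_lapl (x) : lapl (Hb y lam) x = Hb y lam x * (4*lam^2*‖x - y‖^2 - 2*lam*n) := by
  rw [lapl]
  have : ∀ i : Fin n, fderiv ℝ (fun p => fderiv ℝ (Hb y lam) p (EuclideanSpace.single i 1)) x
      (EuclideanSpace.single i 1) = Hb y lam x * (4*lam^2*(x i - y i)^2 - 2*lam) :=
    Hb_second y lam x
  rw [Finset.sum_congr rfl (fun i _ => this i)]
  have hns : ∑ i : Fin n, (x i - y i)^2 = ‖x - y‖^2 := by
    rw [EuclideanSpace.norm_eq]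
    rw [Real.sq_sqrt (by positivity)]
    congr 1
    funext i
    simp [Real.norm_eq_abs, sq_abs]
  rw [← hns, ← Finset.mul_sum]
  congr 1
  rw [Finset.sum_sub_distrib, ← Finset.mul_sum]
  simp [Finset.card_univ, mul_comm]

lemma Db_single_hasFDerivAt (x) (i : Fin n) :
    HasFDerivAt (fun p => Db y lam p (EuclideanSpace.single i 1))
      ((fun p : EuclideanSpace ℝ (Fin n) => -(2*lam) * Hb y lam p) x •
          (EuclideanSpace.proj i : EuclideanSpace ℝ (Fin n) →L[ℝ] ℝ)
        + (fun p : EuclideanSpace ℝ (Fin n) => p i - y i) x • ((-(2*lam)) • Db y lam x)) x := by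
  have hf1 : HasFDerivAt (fun p : EuclideanSpace ℝ (Fin n) => -(2*lam) * Hb y lam p)
      ((-(2*lam)) • Db y lam x) x := (hasFDerivAt_Hb y lam x).const_mul _
  have hf2 : HasFDerivAt (fun p : EuclideanSpace ℝ (Fin n) => p i - y i)
      ((EuclideanSpace.proj i : EuclideanSpace ℝ (Fin n) →L[ℝ] ℝ)) x := by
    simpa using ((EuclideanSpace.proj i : EuclideanSpace ℝ (Fin n) →L[ℝ] ℝ)
      |>.hasFDerivAt (x := x)).sub_const (y i)
  have h3 := hf1.mul hf2
  have hfe : (fun p => Db y lam p (EuclideanSpace.single i 1))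
      = fun p : EuclideanSpace ℝ (Fin n) => -(2*lam) * Hb y lam p * (p i - y i) := by
    funext p
    exact Db_single y lam p i
  rw [hfe]
  exact h3

lemma lapl_v {s : Set (EuclideanSpace ℝ (Fin n))} (hs : IsOpen s)
    {u : EuclideanSpace ℝ (Fin n) → ℝ} (hu : ContDiffOn ℝ 2 u s)
    {x : EuclideanSpace ℝ (Fin n)} (hx : x ∈ s) (eps c : ℝ) :
    lapl (fun p => u p + eps * (Hb y lam p - c)) x = lapl u x + eps * lapl (Hb y lam) x := by
  have huA : ∀ {p : EuclideanSpace ℝ (Fin n)}, p ∈ s → ContDiffAt ℝ 2 u p :=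
    fun hp => hu.contDiffAt (hs.mem_nhds hp)
  set v : EuclideanSpace ℝ (Fin n) → ℝ := fun p => u p + eps * (Hb y lam p - c) with hv
  have hvd : ∀ p ∈ s, HasFDerivAt v (fderiv ℝ u p + eps • Db y lam p) p := by
    intro p hp
    exact (((huA hp).differentiableAt (by norm_num)).hasFDerivAt).add
      (((hasFDerivAt_Hb y lam p).sub_const c).const_mul eps)
  rw [lapl, lapl, lapl, Finset.mul_sum, ← Finset.sum_add_distrib]
  apply Finset.sum_congr rfl
  intro i _
  set e : EuclideanSpace ℝ (Fin n) := EuclideanSpace.single i 1 with he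
  set A : EuclideanSpace ℝ (Fin n) → ℝ := fun p => fderiv ℝ u p e with hA
  set B : EuclideanSpace ℝ (Fin n) → ℝ := fun p => Db y lam p e with hB
  have hfeq : (fun p => fderiv ℝ v p e) =ᶠ[nhds x] (fun p => A p + eps * B p) := by
    filter_upwards [hs.mem_nhds hx] with p hp
    rw [(hvd p hp).fderiv]
    simp [hA, hB]
  have hHeq : (fun p => fderiv ℝ (Hb y lam) p e) = B := by
    funext p
    rw [(hasFDerivAt_Hb y lam p).fderiv]
  have hAd : DifferentiableAt ℝ A x := by
    have h1 : ContDiffAt ℝ 1 (fderiv ℝ u) x := (huA hx).fderiv_right (by norm_num)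
    exact (ContinuousLinearMap.apply ℝ ℝ e).differentiableAt.comp x
      (h1.differentiableAt (by norm_num))
  have hBd : DifferentiableAt ℝ B x := (Db_single_hasFDerivAt y lam x i).differentiableAt
  rw [hfeq.fderiv_eq, hHeq]
  rw [fderiv_fun_add hAd (hBd.const_mul eps), fderiv_const_mul hBd]
  simp


set_option maxHeartbeats 1000000 in
lemma hopf {n : ℕ} (hn : 2 ≤ n) {s : Set (EuclideanSpace ℝ (Fin n))} (hs : IsOpen s)
    {u : EuclideanSpace ℝ (Fin n) → ℝ} (hu : ContDiffOn ℝ 2 u s)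
    (hlap : ∀ x ∈ s, lapl u x = 0) {y : EuclideanSpace ℝ (Fin n)} {R : ℝ} (hR : 0 < R)
    (hball : Metric.closedBall y R ⊆ s) {M : ℝ}
    (hle : ∀ x ∈ Metric.closedBall y R, u x ≤ M)
    (hlt : ∀ x ∈ Metric.ball y R, u x < M)
    {x₀ : EuclideanSpace ℝ (Fin n)} (hx₀ : dist x₀ y = R) (hx₀M : u x₀ = M)
    (hgrad : fderiv ℝ u x₀ = 0) : False := by
  haveI : Nontrivial (EuclideanSpace ℝ (Fin n)) := by
    refine ⟨0, EuclideanSpace.single ⟨0, by omega⟩ 1, fun h => ?_⟩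
    have h2 : ‖EuclideanSpace.single (⟨0, by omega⟩ : Fin n) (1:ℝ)‖ = 1 := by
      rw [EuclideanSpace.norm_single]
      norm_num
    rw [← h, norm_zero] at h2
    norm_num at h2
  set lam : ℝ := (2*(n:ℝ)+2)/R^2 with hlamdef
  have hlam : 0 < lam := by positivity
  have hlamR : lam * R^2 = 2*(n:ℝ)+2 := by rw [hlamdef]; field_simp
  set H := Hb y lam with hH
  set cR : ℝ := Real.exp (-lam * R^2) with hcR
  -- max of u on inner sphere
  have hsne : (Metric.sphere y (R/2)).Nonempty :=
    NormedSpace.sphere_nonempty.mpr (by linarith)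
  have hscomp : IsCompact (Metric.sphere y (R/2)) := isCompact_sphere _ _
  have hssub : Metric.sphere y (R/2) ⊆ Metric.ball y R := fun t ht => by
    simp only [Metric.mem_sphere] at ht
    simp only [Metric.mem_ball, ht]
    linarith
  obtain ⟨sm, hsmS, hsm⟩ := hscomp.exists_isMaxOn hsne
    (hu.continuousOn.mono (fun t ht => hball (Metric.ball_subset_closedBall (hssub ht))))
  set m := u sm with hm
  have hmM : m < M := hlt sm (hssub hsmS)
  set eps : ℝ := (M - m)/2 with heps
  have heps0 : 0 < eps := by rw [heps]; linarith
  set v : EuclideanSpace ℝ (Fin n) → ℝ := fun p => u p + eps * (H p - cR) with hv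
  -- the closed annulus
  set clAnn : Set (EuclideanSpace ℝ (Fin n)) := {p | R/2 ≤ dist p y ∧ dist p y ≤ R} with hclAnn
  have hclAnncl : IsClosed clAnn := by
    have h1 : IsClosed {p : EuclideanSpace ℝ (Fin n) | R/2 ≤ dist p y} :=
      isClosed_le continuous_const (continuous_id.dist continuous_const)
    have h2 : IsClosed {p : EuclideanSpace ℝ (Fin n) | dist p y ≤ R} :=
      isClosed_le (continuous_id.dist continuous_const) continuous_const
    exact h1.inter h2
  have hclAnnsub : clAnn ⊆ Metric.closedBall y R := fun t ht => ht.2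
  have hclAnncomp : IsCompact clAnn :=
    (isCompact_closedBall y R).of_isClosed_subset hclAnncl hclAnnsub
  have hHcont : Continuous H := (Hb_contDiff y lam).continuous
  have hvcont : ContinuousOn v clAnn :=
    ((hu.continuousOn.mono (fun t ht => hball (hclAnnsub ht))).add
      (((hHcont.continuousOn).sub continuousOn_const).const_smul eps))
  have hx₀Ann : x₀ ∈ clAnn := ⟨by rw [hx₀]; linarith, le_of_eq hx₀⟩
  -- v ≤ M on the annulus
  have hvle : ∀ p ∈ clAnn, v p ≤ M := by
    obtain ⟨m₀, hm₀, hmax₀⟩ := hclAnncomp.exists_isMaxOn ⟨x₀, hx₀Ann⟩ hvcont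
    have hm₀M : v m₀ ≤ M := by
      rcases eq_or_lt_of_le hm₀.1 with heq1 | hlt1
      · -- inner sphere
        have hHle : H m₀ ≤ 1 := by
          rw [hH, Hb]
          rw [Real.exp_le_one_iff]
          have : (0:ℝ) ≤ ‖m₀ - y‖^2 := by positivity
          nlinarith
        have hcR0 : 0 < cR := Real.exp_pos _
        have hum : u m₀ ≤ m := by
          apply hsm
          simp only [Metric.mem_sphere]
          exact heq1.symm
        have : v m₀ ≤ m + eps * 1 := by
          rw [hv]
          simp only
          have : eps * (H m₀ - cR) ≤ eps * 1 := by
            apply mul_le_mul_of_nonneg_left _ heps0.le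
            linarith
          linarith
        have h7 : eps = (M - m)/2 := heps
        linarith
      rcases eq_or_lt_of_le hm₀.2 with heq2 | hlt2
      · -- outer sphere
        have : H m₀ = cR := by
          rw [hH, Hb, hcR]
          congr 1
          rw [← dist_eq_norm, heq2]
        rw [hv]
        simp only [this, sub_self, mul_zero, add_zero]
        exact hle m₀ hm₀.2
      · -- interior: contradiction via laplacian
        exfalso
        set Ann : Set (EuclideanSpace ℝ (Fin n)) := {p | R/2 < dist p y ∧ dist p y < R}
          with hAnn
        have hAnnop : IsOpen Ann := by
          have h1 : IsOpen {p : EuclideanSpace ℝ (Fin n) | R/2 < dist p y} :=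
            isOpen_lt continuous_const (continuous_id.dist continuous_const)
          have h2 : IsOpen {p : EuclideanSpace ℝ (Fin n) | dist p y < R} :=
            isOpen_lt (continuous_id.dist continuous_const) continuous_const
          exact h1.inter h2
        have hm₀Ann : m₀ ∈ Ann := ⟨hlt1, hlt2⟩
        have hAnnsub : Ann ⊆ s := fun t ht =>
          hball (Metric.ball_subset_closedBall ht.2)
        have hlocmax : IsLocalMax v m₀ := by
          have hcl : clAnn ∈ nhds m₀ :=
            Filter.mem_of_superset (hAnnop.mem_nhds hm₀Ann)
              (fun t ht => ⟨ht.1.le, ht.2.le⟩)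
          filter_upwards [hcl] with t ht
          exact hmax₀ ht
        have hvc2 : ContDiffOn ℝ 2 v Ann :=
          (hu.mono hAnnsub).add
            ((((Hb_contDiff y lam).contDiffOn).sub contDiffOn_const).const_smul eps)
        have hl1 : lapl v m₀ ≤ 0 := lapl_nonpos hAnnop hvc2 hm₀Ann hlocmax
        have hl2 : lapl v m₀ = lapl u m₀ + eps * lapl H m₀ :=
          lapl_v y lam hs hu (hAnnsub hm₀Ann) eps cR
        have hl3 : lapl u m₀ = 0 := hlap m₀ (hAnnsub hm₀Ann)
        have hl4 : lapl H m₀ = H m₀ * (4*lam^2*‖m₀ - y‖^2 - 2*lam*n) := Hb_lapl y lam m₀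
        have hnorm : R/2 ≤ ‖m₀ - y‖ := by rw [← dist_eq_norm]; exact hm₀.1
        have hpos : 0 < 4*lam^2*‖m₀ - y‖^2 - 2*lam*n := by
          have h5 : lam^2 * (R/2)^2 ≤ lam^2 * ‖m₀-y‖^2 := by
            apply mul_le_mul_of_nonneg_left _ (by positivity)
            apply pow_le_pow_left₀ (by linarith) hnorm 2
          have h6 : lam^2*(R/2)^2 = lam * (lam*R^2) / 4 := by ring
          rw [h6, hlamR] at h5
          nlinarith
        have : 0 < lapl v m₀ := by
          rw [hl2, hl3, hl4]
          have := Hb_pos y lam m₀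
          positivity
        linarith
    intro p hp
    exact le_trans (hmax₀ hp) hm₀M
  -- directional derivative contradiction at x₀
  set Dvec : EuclideanSpace ℝ (Fin n) := x₀ - y with hDvec
  have hDn : ‖Dvec‖ = R := by rw [hDvec, ← dist_eq_norm]; exact hx₀
  set d : EuclideanSpace ℝ (Fin n) := (-(R⁻¹)) • Dvec with hd
  set φ : ℝ → ℝ := fun t => v (x₀ + t • d) with hφd
  have hmem : ∀ t ∈ Set.Icc (0:ℝ) (R/2), x₀ + t • d ∈ clAnn := by
    intro t ht
    have hvec : x₀ + t • d - y = (1 - t * R⁻¹) • Dvec := by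
      rw [hd, hDvec]
      module
    have h9 : t * R⁻¹ ≤ 1/2 := by
      rw [← div_eq_mul_inv, div_le_iff₀ hR]
      linarith [ht.2]
    have hnorm : dist (x₀ + t • d) y = R - t := by
      rw [dist_eq_norm, hvec, norm_smul, hDn, Real.norm_eq_abs,
        abs_of_nonneg (by linarith : (0:ℝ) ≤ 1 - t * R⁻¹)]
      field_simp
    constructor <;> rw [hnorm] <;> [linarith [ht.2]; linarith [ht.1]]
  have hHx₀ : H x₀ = cR := by
    rw [hH, Hb, hcR]
    congr 2
    rw [← hDvec, hDn]
  have hφ0 : φ 0 = M := by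
    have : x₀ + (0:ℝ) • d = x₀ := by simp
    rw [hφd]
    simp only [this, hv]
    simp only [hHx₀, sub_self, mul_zero, add_zero]
    exact hx₀M
  have hφle : ∀ t ∈ Set.Icc (0:ℝ) (R/2), φ t ≤ φ 0 := by
    intro t ht
    rw [hφ0]
    exact hvle _ (hmem t ht)
  -- derivative of φ at 0
  have hx₀s : x₀ ∈ s := hball (by simp [Metric.mem_closedBall, hx₀])
  have hud : DifferentiableAt ℝ u x₀ :=
    (hu.contDiffAt (hs.mem_nhds hx₀s)).differentiableAt (by norm_num)
  have huF : HasFDerivAt u (0 : EuclideanSpace ℝ (Fin n) →L[ℝ] ℝ) x₀ := by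
    have := hud.hasFDerivAt
    rwa [hgrad] at this
  have hvF : HasFDerivAt v ((0 : EuclideanSpace ℝ (Fin n) →L[ℝ] ℝ)
      + eps • Db y lam x₀) x₀ :=
    huF.add (((hasFDerivAt_Hb y lam x₀).sub_const cR).const_mul eps)
  have hline : HasDerivAt (fun t : ℝ => x₀ + t • d) d 0 := by
    simpa using ((hasDerivAt_id (0:ℝ)).smul_const d).const_add x₀
  have hφF : HasDerivAt φ (((0 : EuclideanSpace ℝ (Fin n) →L[ℝ] ℝ)
      + eps • Db y lam x₀) d) 0 := by
    have h8 : HasFDerivAt v ((0 : EuclideanSpace ℝ (Fin n) →L[ℝ] ℝ)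
        + eps • Db y lam x₀) ((fun t : ℝ => x₀ + t • d) 0) := by
      simpa using hvF
    exact h8.comp_hasDerivAt 0 hline
  have hinner : (inner ℝ (x₀ - y) d : ℝ) = -R := by
    rw [hd, ← hDvec, real_inner_smul_right, real_inner_self_eq_norm_sq, hDn]
    field_simp
  have hc₀ : ((0 : EuclideanSpace ℝ (Fin n) →L[ℝ] ℝ) + eps • Db y lam x₀) d
      = eps * (2 * lam * R * H x₀) := by
    simp only [ContinuousLinearMap.add_apply, ContinuousLinearMap.zero_apply,
      ContinuousLinearMap.coe_smul', Pi.smul_apply, smul_eq_mul, zero_add]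
    rw [Db_apply, hinner]
    rw [← hH]
    ring
  have hc₀pos : 0 < ((0 : EuclideanSpace ℝ (Fin n) →L[ℝ] ℝ) + eps • Db y lam x₀) d := by
    rw [hc₀]
    have := Hb_pos y lam x₀
    rw [← hH] at this
    positivity
  exact no_right_max (by linarith : (0:ℝ) < R/2) hφF hc₀pos hφle

end AuxCalc

section AuxSets
open Filter Metric Set
section SetLemmas

variable {n : ℕ} (Ω : Set (EuclideanSpace ℝ (Fin n))) (w : EuclideanSpace ℝ (Fin n)) (ε : ℝ)

/-- the translated copy of the closed hole -/
def Kz (z : Fin n → ℤ) : Set (EuclideanSpace ℝ (Fin n)) :=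
  (fun x => intVec z + x) '' closure (hole Ω w ε)

/-- union of all translates -/
def CC : Set (EuclideanSpace ℝ (Fin n)) := ⋃ z : Fin n → ℤ, Kz Ω w ε z

lemma intVec_apply (z : Fin n → ℤ) (i : Fin n) : intVec z i = (z i : ℝ) := rfl

lemma intVec_add (z₁ z₂ : Fin n → ℤ) : intVec (z₁ + z₂) = intVec z₁ + intVec z₂ := by
  ext i
  rw [PiLp.add_apply]
  show ((z₁ + z₂) i : ℝ) = (z₁ i : ℝ) + (z₂ i : ℝ)
  rw [Pi.add_apply]
  push_cast
  ring

lemma intVec_zero : intVec (0 : Fin n → ℤ) = 0 := by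
  ext i
  rw [PiLp.zero_apply]
  show ((0 : ℤ) : ℝ) = 0
  simp

lemma closure_image_transl (a : EuclideanSpace ℝ (Fin n)) (s : Set (EuclideanSpace ℝ (Fin n))) :
    closure ((fun x => a + x) '' s) = (fun x => a + x) '' closure s := by
  have h := (Homeomorph.addLeft a).image_closure s
  simp only [Homeomorph.coe_addLeft] at h
  exact h.symm

lemma perfDom_eq : perfDom Ω w ε = (CC Ω w ε)ᶜ := by
  rw [perfDom, CC]
  congr 1
  apply iUnion_congr
  intro z
  rw [closure_image_transl]
  rfl

lemma mem_Kz {x : EuclideanSpace ℝ (Fin n)} {z : Fin n → ℤ} :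
    x ∈ Kz Ω w ε z ↔ x - intVec z ∈ closure (hole Ω w ε) := by
  constructor
  · rintro ⟨c, hc, rfl⟩
    simpa using hc
  · intro h
    refine ⟨x - intVec z, h, ?_⟩
    show intVec z + (x - intVec z) = x
    abel

lemma mem_CC {x : EuclideanSpace ℝ (Fin n)} :
    x ∈ CC Ω w ε ↔ ∃ z : Fin n → ℤ, x - intVec z ∈ closure (hole Ω w ε) := by
  rw [CC, mem_iUnion]
  exact exists_congr (fun z => mem_Kz Ω w ε)

lemma CC_shift (z : Fin n → ℤ) {x : EuclideanSpace ℝ (Fin n)} :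
    x + intVec z ∈ CC Ω w ε ↔ x ∈ CC Ω w ε := by
  rw [mem_CC, mem_CC]
  constructor
  · rintro ⟨z', hz'⟩
    refine ⟨z' - z, ?_⟩
    have : x - intVec (z' - z) = x + intVec z - intVec z' := by
      have := intVec_add (n := n) (z' - z) z
      simp only [sub_add_cancel] at this
      rw [this]
      abel
    rwa [this]
  · rintro ⟨z', hz'⟩
    refine ⟨z' + z, ?_⟩
    rw [intVec_add]
    have : x + intVec z - (intVec z' + intVec z) = x - intVec z' := by abel
    rwa [this]

lemma CC_image_shift (z : Fin n → ℤ) :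
    (fun x => intVec z + x) '' CC Ω w ε = CC Ω w ε := by
  ext x
  constructor
  · rintro ⟨c, hc, rfl⟩
    show intVec z + c ∈ CC Ω w ε
    have h0 : intVec z + c = c + intVec z := by abel
    rw [h0]
    exact (CC_shift Ω w ε z).mpr hc
  · intro hx
    refine ⟨x - intVec z, ?_, show intVec z + (x - intVec z) = x by abel⟩
    have h2 : x - intVec z + intVec z ∈ CC Ω w ε ↔ x - intVec z ∈ CC Ω w ε :=
      CC_shift Ω w ε z
    apply h2.mp
    have : x - intVec z + intVec z = x := by abel
    rwa [this]

lemma interior_CC_shift (z : Fin n → ℤ) {x : EuclideanSpace ℝ (Fin n)} :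
    x + intVec z ∈ interior (CC Ω w ε) ↔ x ∈ interior (CC Ω w ε) := by
  have h := (Homeomorph.addLeft (intVec z)).image_interior (CC Ω w ε)
  simp only [Homeomorph.coe_addLeft] at h
  rw [CC_image_shift] at h
  constructor
  · intro hx
    rw [← h] at hx
    obtain ⟨c, hc, hceq⟩ := hx
    have : c = x := by
      have : intVec z + c = x + intVec z := hceq
      have h3 : intVec z + c = intVec z + x := by rw [this]; abel
      exact add_left_cancel h3
    rwa [← this]
  · intro hx
    rw [← h]
    exact ⟨x, hx, show intVec z + x = x + intVec z by abel⟩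

lemma closure_perfDom_eq : closure (perfDom Ω w ε) = (interior (CC Ω w ε))ᶜ := by
  rw [perfDom_eq, closure_compl]

lemma T_shift (z : Fin n → ℤ) {x : EuclideanSpace ℝ (Fin n)}
    (hx : x ∈ closure (perfDom Ω w ε)) : x + intVec z ∈ closure (perfDom Ω w ε) := by
  rw [closure_perfDom_eq] at hx ⊢
  intro h
  exact hx ((interior_CC_shift Ω w ε z).mp h)

lemma abs_coord_le_norm (v : EuclideanSpace ℝ (Fin n)) (i : Fin n) : |v i| ≤ ‖v‖ := by
  have h1 : |(inner ℝ v (EuclideanSpace.single i (1:ℝ)) : ℝ)| ≤ ‖v‖ * ‖EuclideanSpace.single i (1:ℝ)‖ :=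
    abs_real_inner_le_norm v _
  rw [EuclideanSpace.inner_single_right, EuclideanSpace.norm_single] at h1
  simpa using h1

lemma Kz_closed (z : Fin n → ℤ) : IsClosed (Kz Ω w ε z) := by
  rw [Kz, ← closure_image_transl]
  exact isClosed_closure

lemma CC_closed (hsub : closure (hole Ω w ε) ⊆ unitCell n) : IsClosed (CC Ω w ε) := by
  apply LocallyFinite.isClosed_iUnion _ (Kz_closed Ω w ε)
  intro x
  refine ⟨Metric.ball x 1, Metric.ball_mem_nhds x one_pos, ?_⟩
  set B : ℤ := ⌈‖x‖⌉ + 2 with hB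
  apply Set.Finite.subset (Set.Finite.pi (fun i : Fin n => Set.finite_Icc (-B) B))
  rintro z ⟨p, hp1, hp2⟩
  rw [Set.mem_pi]
  intro i _
  rw [Set.mem_Icc]
  obtain ⟨c, hc, hceq⟩ := hp1
  have hcU : c ∈ unitCell n := hsub hc
  have hci := hcU i
  have hpi : p i = (z i : ℝ) + c i := by rw [← hceq]; rfl
  have hdx : |p i - x i| ≤ ‖p - x‖ := by
    have := abs_coord_le_norm (p - x) i
    simpa using this
  have hpx : ‖p - x‖ < 1 := by
    rw [← dist_eq_norm]
    exact hp2
  have hxi : |x i| ≤ ‖x‖ := abs_coord_le_norm x i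
  have hzb : |(z i : ℝ)| ≤ ‖x‖ + 2 := by
    have h1 : |(z i : ℝ)| = |p i - c i| := by rw [hpi]; congr 1; ring
    rw [h1]
    have : |p i - c i| ≤ |p i - x i| + |x i| + |c i| := by
      have := abs_sub_abs_le_abs_sub (p i) (c i)
      have h2 : p i - c i = (p i - x i) + x i - c i := by ring
      rw [h2]
      calc |(p i - x i) + x i - c i| ≤ |(p i - x i) + x i| + |c i| := abs_sub _ _
        _ ≤ |p i - x i| + |x i| + |c i| := by
            have := abs_add_le (p i - x i) (x i); linarith
    have hc1 : |c i| ≤ 1 := by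
      rw [abs_of_pos hci.1]; exact hci.2.le
    linarith
  have hBle : ‖x‖ + 2 ≤ (B : ℝ) := by
    rw [hB]
    push_cast
    have := Int.le_ceil ‖x‖
    linarith
  constructor
  · have : -((B : ℝ)) ≤ (z i : ℝ) := by
      have := neg_abs_le ((z i : ℝ))
      linarith
    exact_mod_cast this
  · have : (z i : ℝ) ≤ (B : ℝ) := le_trans (le_abs_self _) (le_trans hzb hBle)
    exact_mod_cast this

lemma perfDom_open (hsub : closure (hole Ω w ε) ⊆ unitCell n) : IsOpen (perfDom Ω w ε) := by
  rw [perfDom_eq]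
  exact (CC_closed Ω w ε hsub).isOpen_compl

lemma unitCell_open : IsOpen (unitCell n) := by
  have : unitCell n = ⋂ i : Fin n, (fun x : EuclideanSpace ℝ (Fin n) => x i) ⁻¹' Set.Ioo 0 1 := by
    ext x
    simp [unitCell, Set.mem_iInter]
  rw [this]
  apply isOpen_iInter_of_finite
  intro i
  exact (EuclideanSpace.proj i).continuous.isOpen_preimage _ isOpen_Ioo

lemma Kz_zero : Kz Ω w ε 0 = closure (hole Ω w ε) := by
  ext x
  rw [mem_Kz, intVec_zero, sub_zero]

lemma CC_inter_unitCell (hsub : closure (hole Ω w ε) ⊆ unitCell n) :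
    CC Ω w ε ∩ unitCell n = closure (hole Ω w ε) := by
  apply Set.Subset.antisymm
  · rintro x ⟨hx1, hx2⟩
    rw [mem_CC] at hx1
    obtain ⟨z, hz⟩ := hx1
    have hzU := hsub hz
    have hz0 : z = 0 := by
      funext i
      have h1 := hzU i
      have h2 := hx2 i
      simp only [Set.mem_Ioo] at h1 h2
      have h3 : (x - intVec z) i = x i - (z i : ℝ) := rfl
      rw [h3] at h1
      have : -1 < (z i : ℝ) ∧ (z i : ℝ) < 1 := by constructor <;> linarith [h1.1, h1.2, h2.1, h2.2]
      have ha : -1 < z i := by exact_mod_cast this.1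
      have hb : z i < 1 := by exact_mod_cast this.2
      show z i = (0 : Fin n → ℤ) i
      rw [Pi.zero_apply]
      omega
    rw [hz0, intVec_zero, sub_zero] at hz
    exact hz
  · intro x hx
    refine ⟨?_, hsub hx⟩
    rw [mem_CC]
    exact ⟨0, by rwa [intVec_zero, sub_zero]⟩

lemma frontier_clhole_sub_T (hsub : closure (hole Ω w ε) ⊆ unitCell n) :
    frontier (closure (hole Ω w ε)) ⊆ closure (perfDom Ω w ε) := by
  intro b hb
  rw [closure_perfDom_eq]
  intro hbint
  have hbc : b ∈ closure (hole Ω w ε) := by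
    have h0 := frontier_subset_closure hb
    rwa [closure_closure] at h0
  have hbU : b ∈ unitCell n := hsub hbc
  have hU : IsOpen (interior (CC Ω w ε) ∩ unitCell n) :=
    isOpen_interior.inter (unitCell_open)
  have hsub2 : interior (CC Ω w ε) ∩ unitCell n ⊆ closure (hole Ω w ε) := by
    intro t ht
    exact (CC_inter_unitCell Ω w ε hsub) ▸ ⟨interior_subset ht.1, ht.2⟩
  have : b ∈ interior (closure (hole Ω w ε)) :=
    interior_maximal hsub2 hU ⟨hbint, hbU⟩
  rw [frontier, Set.mem_diff] at hb
  exact hb.2 this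

lemma off_frontier (hsub : closure (hole Ω w ε) ⊆ unitCell n)
    {p : EuclideanSpace ℝ (Fin n)} (hp : p ∈ closure (perfDom Ω w ε))
    (hpnot : p ∉ perfDom Ω w ε) :
    ∃ z : Fin n → ℤ, p + intVec z ∈ frontier (closure (hole Ω w ε)) := by
  rw [closure_perfDom_eq] at hp
  rw [perfDom_eq] at hpnot
  simp only [Set.mem_compl_iff, not_not] at hpnot hp
  rw [mem_CC] at hpnot
  obtain ⟨z, hz⟩ := hpnot
  refine ⟨-z, ?_⟩
  have hsubeq : p + intVec (-z) = p - intVec z := by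
    have h := intVec_add (n := n) z (-z)
    simp only [add_neg_cancel, intVec_zero] at h
    have : intVec (-z) = -intVec z := by
      have := h.symm
      linear_combination (norm := abel) this
    rw [this]
    abel
  rw [hsubeq]
  constructor
  · rw [closure_closure]
    exact hz
  · intro hint
    have h2 : interior (closure (hole Ω w ε)) ⊆ interior (CC Ω w ε) := by
      apply interior_mono
      rw [← Kz_zero Ω w ε]
      exact Set.subset_iUnion (Kz Ω w ε) 0
    have h3 : p - intVec z ∈ interior (CC Ω w ε) := h2 hint
    have h4 : p - intVec z + intVec z ∈ interior (CC Ω w ε) :=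
      (interior_CC_shift Ω w ε z).mpr h3
    have h5 : p - intVec z + intVec z = p := by abel
    rw [h5] at h4
    exact hp h4

lemma frontier_clT_mem (hsub : closure (hole Ω w ε) ⊆ unitCell n)
    {q : EuclideanSpace ℝ (Fin n)} (hq : q ∈ frontier (closure (hole Ω w ε))) :
    q ∈ closure (perfDom Ω w ε) := frontier_clhole_sub_T Ω w ε hsub hq


lemma intVec_single (k : ℤ) (i : Fin n) :
    (k:ℝ) • EuclideanSpace.single i (1:ℝ) = intVec (fun j => if j = i then k else 0) := by
  ext j
  rw [PiLp.smul_apply, EuclideanSpace.single_apply, intVec_apply]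
  by_cases h : j = i <;> simp [h]

variable {u : EuclideanSpace ℝ (Fin n) → ℝ}

lemma u_shift_int (hper : IsPeriodicOn u (closure (perfDom Ω w ε))) (i : Fin n) :
    ∀ (k : ℤ) (x : EuclideanSpace ℝ (Fin n)), x ∈ closure (perfDom Ω w ε) →
      u (x + (k:ℝ) • EuclideanSpace.single i 1) = u x := by
  intro k
  induction k using Int.induction_on with
  | zero => intro x hx; simp
  | succ k ih =>
      intro x hx
      have hxk : x + (k:ℝ) • EuclideanSpace.single i (1:ℝ) ∈ closure (perfDom Ω w ε) := by
        have h5 := T_shift Ω w ε (fun j => if j = i then (k:ℤ) else 0) hx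
        rw [← intVec_single] at h5
        push_cast at h5
        exact h5
      have h1 := hper _ hxk i
      have h2 : x + ((k:ℝ) + 1) • EuclideanSpace.single i (1:ℝ)
          = (x + (k:ℝ) • EuclideanSpace.single i 1) + EuclideanSpace.single i 1 := by
        module
      have ih' := ih x hx
      push_cast at ih' ⊢
      rw [h2, h1]
      exact ih'
  | pred k ih =>
      intro x hx
      have hx' : x + (-((k:ℝ)+1)) • EuclideanSpace.single i (1:ℝ) ∈ closure (perfDom Ω w ε) := by
        have h5 := T_shift Ω w ε (fun j => if j = i then (-((k:ℤ)+1)) else 0) hx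
        rw [← intVec_single] at h5
        push_cast at h5
        exact h5
      have h1 := hper _ hx' i
      have h2 : (x + (-((k:ℝ)+1)) • EuclideanSpace.single i (1:ℝ)) + EuclideanSpace.single i 1
          = x + (-(k:ℝ)) • EuclideanSpace.single i 1 := by module
      have ih' := ih x hx
      push_cast at ih' ⊢
      rw [h2] at h1
      have h6 : (-(k:ℝ) - 1) = -((k:ℝ)+1) := by ring
      rw [h6, ← h1]
      exact ih'

lemma u_shift (hper : IsPeriodicOn u (closure (perfDom Ω w ε)))
    (z : Fin n → ℤ) (x : EuclideanSpace ℝ (Fin n)) (hx : x ∈ closure (perfDom Ω w ε)) :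
    u (x + intVec z) = u x := by
  have key : ∀ s : Finset (Fin n), ∀ x ∈ closure (perfDom Ω w ε),
      u (x + intVec (fun j => if j ∈ s then z j else 0)) = u x := by
    intro s
    induction s using Finset.induction_on with
    | empty =>
        intro x hx
        have : (fun j : Fin n => if j ∈ (∅ : Finset (Fin n)) then z j else 0) = 0 := by
          funext j; simp
        rw [this, intVec_zero, add_zero]
    | @insert a s ha ih =>
        intro x hx
        have hsplit : (fun j : Fin n => if j ∈ insert a s then z j else 0)
            = (fun j => if j = a then z a else 0) + (fun j => if j ∈ s then z j else 0) := by
          funext j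
          by_cases h1 : j = a
          · subst h1
            simp [ha]
          · simp [h1, Finset.mem_insert]
        rw [hsplit, intVec_add, ← add_assoc, ← intVec_single]
        have hxa : x + ((z a : ℝ)) • EuclideanSpace.single a (1:ℝ) ∈ closure (perfDom Ω w ε) := by
          rw [intVec_single]
          exact T_shift Ω w ε _ hx
        rw [ih _ hxa]
        exact u_shift_int Ω w ε hper a (z a) x hx
  have h0 : (fun j : Fin n => if j ∈ Finset.univ then z j else 0) = z := by
    funext j; simp
  have := key Finset.univ x hx
  rwa [h0] at this

end SetLemmas
end AuxSets

open Filter Metric Set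

/-- maximum principle in the periodically perforated domain: the supremum of a
periodic harmonic function over `cl T(ε)` is attained (as a maximum) on `∂(w + εΩ)`. -/
theorem stmt_0 (n : ℕ) (hn : 2 ≤ n)
    (Ω : Set (EuclideanSpace ℝ (Fin n))) (hΩne : Ω.Nonempty)
    (hΩbd : Bornology.IsBounded Ω) (hΩop : IsOpen Ω)
    (w : EuclideanSpace ℝ (Fin n)) (hw : w ∈ unitCell n)
    (ε : ℝ) (hε : 0 < ε) (hsub : closure (hole Ω w ε) ⊆ unitCell n)
    (u : EuclideanSpace ℝ (Fin n) → ℝ)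
    (hucont : ContinuousOn u (closure (perfDom Ω w ε)))
    (huharm : IsHarmonicOn u (perfDom Ω w ε))
    (huper : IsPeriodicOn u (closure (perfDom Ω w ε))) :
    ∃ x₀ ∈ frontier (hole Ω w ε),
      (∀ x ∈ closure (perfDom Ω w ε), u x ≤ u x₀) ∧
      sSup (u '' closure (perfDom Ω w ε)) = u x₀ := by
  set T : Set (EuclideanSpace ℝ (Fin n)) := closure (perfDom Ω w ε) with hT
  set box : Set (EuclideanSpace ℝ (Fin n)) := {x | ∀ i, x i ∈ Set.Icc (0:ℝ) 1} with hbox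
  have hboxcl : IsClosed box := by
    have : box = ⋂ i : Fin n, (fun x : EuclideanSpace ℝ (Fin n) => x i) ⁻¹' Set.Icc 0 1 := by
      ext x; simp [hbox, Set.mem_iInter]
    rw [this]
    exact isClosed_iInter (fun i =>
      IsClosed.preimage (EuclideanSpace.proj i).continuous isClosed_Icc)
  have hKcl : IsClosed (T ∩ box) := isClosed_closure.inter hboxcl
  have hKbd : Bornology.IsBounded (T ∩ box) := by
    apply Bornology.IsBounded.subset
      (Metric.isBounded_closedBall (x := (0 : EuclideanSpace ℝ (Fin n))) (r := Real.sqrt n))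
    rintro x ⟨_, hxb⟩
    rw [Metric.mem_closedBall, dist_zero_right, EuclideanSpace.norm_eq]
    apply Real.sqrt_le_sqrt
    calc ∑ i : Fin n, ‖x i‖^2 ≤ ∑ i : Fin n, 1 := by
          apply Finset.sum_le_sum
          intro i _
          have h1 := hxb i
          rw [Real.norm_eq_abs, abs_of_nonneg h1.1]
          have h2 := pow_le_pow_left₀ h1.1 h1.2 2
          simpa using h2
      _ = (n : ℝ) := by simp
  have hKcomp : IsCompact (T ∩ box) := Metric.isCompact_of_isClosed_isBounded hKcl hKbd
  have hK0 : (0 : EuclideanSpace ℝ (Fin n)) ∈ T ∩ box := by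
    constructor
    · rw [hT, closure_perfDom_eq]
      intro h0
      have h1 : (0 : EuclideanSpace ℝ (Fin n)) ∈ CC Ω w ε := interior_subset h0
      rw [mem_CC] at h1
      obtain ⟨z, hz⟩ := h1
      have h2 := (hsub hz) ⟨0, by omega⟩
      have h3 : ((0 : EuclideanSpace ℝ (Fin n)) - intVec z) ⟨0, by omega⟩
          = -(z ⟨0, by omega⟩ : ℝ) := by
        rw [PiLp.sub_apply, PiLp.zero_apply, intVec_apply]
        ring
      rw [h3] at h2
      obtain ⟨h4, h5⟩ := h2
      have h6 : (z ⟨0, by omega⟩ : ℝ) < 0 := by linarith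
      have h7 : (-1 : ℝ) < (z ⟨0, by omega⟩ : ℝ) := by linarith
      have h8 : z ⟨0, by omega⟩ < 0 := by exact_mod_cast h6
      have h9 : (-1 : ℤ) < z ⟨0, by omega⟩ := by exact_mod_cast h7
      omega
    · intro i
      rw [PiLp.zero_apply]
      exact ⟨le_refl 0, by norm_num⟩
  obtain ⟨p, hpK, hpmax⟩ := hKcomp.exists_isMaxOn ⟨0, hK0⟩
    (hucont.mono Set.inter_subset_left)
  -- global bound
  have hglobal : ∀ x ∈ T, u x ≤ u p := by
    intro x hx
    set z : Fin n → ℤ := fun i => -⌊x i⌋ with hz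
    have hx' : x + intVec z ∈ T := T_shift Ω w ε z hx
    have hboxmem : x + intVec z ∈ box := by
      intro i
      have h1 : (x + intVec z) i = x i - (⌊x i⌋ : ℝ) := by
        rw [PiLp.add_apply, intVec_apply, hz]
        push_cast
        ring
      rw [h1, Int.self_sub_floor]
      exact ⟨Int.fract_nonneg _, (Int.fract_lt_one _).le⟩
    have h2 : u (x + intVec z) ≤ u p := hpmax ⟨hx', hboxmem⟩
    have h3 := u_shift Ω w ε huper z x hx
    rw [h3] at h2
    exact h2
  by_cases hA : ∃ b ∈ frontier (closure (hole Ω w ε)), u b = u p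
  · obtain ⟨b, hbf, hbeq⟩ := hA
    have hbT : b ∈ T := frontier_clhole_sub_T Ω w ε hsub hbf
    refine ⟨b, frontier_closure_subset hbf, fun x hx => hbeq ▸ hglobal x hx, ?_⟩
    apply IsGreatest.csSup_eq
    constructor
    · exact ⟨b, hbT, rfl⟩
    · rintro _ ⟨x, hx, rfl⟩
      exact hbeq ▸ hglobal x hx
  · exfalso
    push_neg at hA
    have hpD : p ∈ perfDom Ω w ε := by
      by_contra hpnot
      obtain ⟨z, hzf⟩ := off_frontier Ω w ε hsub hpK.1 hpnot
      exact hA _ hzf (u_shift Ω w ε huper z p hpK.1)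
    set A : Set (EuclideanSpace ℝ (Fin n)) := {x | x ∈ T ∧ u x = u p} with hAdef
    have hAeq : A = T ∩ u ⁻¹' {u p} := by
      ext x; simp [hAdef]
    have hAclosed : IsClosed A := by
      rw [hAeq]
      exact hucont.preimage_isClosed_of_isClosed isClosed_closure isClosed_singleton
    have hAsub : A ⊆ perfDom Ω w ε := by
      intro x hxA
      by_contra hxnot
      obtain ⟨z, hzf⟩ := off_frontier Ω w ε hsub hxA.1 hxnot
      have h1 := u_shift Ω w ε huper z x hxA.1
      rw [hxA.2] at h1
      exact hA _ hzf h1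
    have hpA : p ∈ A := ⟨hpK.1, rfl⟩
    have hc₀ : ∃ c₀, c₀ ∉ A := by
      obtain ⟨ω, hω⟩ := hΩne
      refine ⟨w + ε • ω, fun hcA => ?_⟩
      have h1 : w + ε • ω ∈ CC Ω w ε := by
        rw [mem_CC]
        refine ⟨0, ?_⟩
        rw [intVec_zero, sub_zero]
        exact subset_closure ⟨ω, hω, rfl⟩
      have h2 := hAsub hcA
      rw [perfDom_eq] at h2
      exact h2 h1
    have hDopen : IsOpen (perfDom Ω w ε) := perfDom_open Ω w ε hsub
    by_cases hAopen : IsOpen A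
    · rcases isClopen_iff.mp ⟨hAclosed, hAopen⟩ with h | h
      · rw [h] at hpA; exact hpA
      · obtain ⟨c₀, hc₀⟩ := hc₀
        rw [h] at hc₀
        exact hc₀ (Set.mem_univ _)
    · rw [isOpen_iff_mem_nhds] at hAopen
      push_neg at hAopen
      obtain ⟨a, haA, haN⟩ := hAopen
      obtain ⟨r0, hr0, hr0sub⟩ := Metric.isOpen_iff.mp hDopen a (hAsub haA)
      have hbsub : ¬ (Metric.ball a (r0/4) ⊆ A) := fun hsubA =>
        haN (Filter.mem_of_superset (Metric.ball_mem_nhds a (by linarith)) hsubA)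
      obtain ⟨y, hyball, hynotA⟩ := Set.not_subset.mp hbsub
      set R := Metric.infDist y A with hR
      have hRpos : 0 < R := (hAclosed.notMem_iff_infDist_pos ⟨p, hpA⟩).mp hynotA
      have hRle : R ≤ dist y a := Metric.infDist_le_dist_of_mem haA
      have hball : Metric.closedBall y R ⊆ perfDom Ω w ε := by
        intro t ht
        apply hr0sub
        rw [Metric.mem_ball]
        have h1 : dist t y ≤ R := ht
        have h2 : dist y a < r0/4 := hyball
        calc dist t a ≤ dist t y + dist y a := dist_triangle t y a
          _ ≤ R + r0/4 := by linarith
          _ ≤ dist y a + r0/4 := by linarith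
          _ < r0 := by linarith
      have hle : ∀ x ∈ Metric.closedBall y R, u x ≤ u p :=
        fun x hx => hglobal x (subset_closure (hball hx))
      have hlt : ∀ x ∈ Metric.ball y R, u x < u p := by
        intro x hx
        have h1 : x ∈ T := subset_closure (hball (Metric.ball_subset_closedBall hx))
        rcases lt_or_eq_of_le (hglobal x h1) with h | h
        · exact h
        · exfalso
          have hxA : x ∈ A := ⟨h1, h⟩
          have h9 : Metric.infDist y A ≤ dist y x := Metric.infDist_le_dist_of_mem hxA
          rw [← hR] at h9
          rw [Metric.mem_ball] at hx
          rw [dist_comm] at h9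
          linarith
      obtain ⟨x₀, hx₀A, hx₀d⟩ := hAclosed.exists_infDist_eq_dist ⟨p, hpA⟩ y
      have hx₀dist : dist x₀ y = R := by rw [dist_comm]; exact hx₀d.symm
      have hlocmax : IsLocalMax u x₀ := by
        filter_upwards [hDopen.mem_nhds (hAsub hx₀A)] with t ht
        rw [hx₀A.2]
        exact hglobal t (subset_closure ht)
      exact hopf hn hDopen huharm.1 huharm.2 hRpos hball hle hlt hx₀dist hx₀A.2
        hlocmax.fderiv_eq_zero
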